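/- Let d ≥ 1, Θ a parameter set, Ω a measurable space carrying a family of probability measures (P_θ)_{θ∈Θ} with expectations E_θ, and let X_n, X : Ω → ℝ^d (n ∈ ℕ) be Borel measurable. Assume: (a) sup_{θ∈Θ} sup_{f∈F_BL(ℝ^d)} E_θ[|f(X_n) − f(X)|] → 0 as n → ∞; and (b) the family of laws of X is tight uniformly in θ, i.e. for every ε > 0 there is a compact set K ⊆ ℝ^d with inf_{θ∈Θ} P_θ(X ∈ K) ≥ 1 − ε. Then for every ε > 0 there exist a compact set K_ε ⊆ ℝ^d and n₀ ∈ ℕ such that for all n ≥ n₀, inf_{θ∈Θ} P_θ(X_n ∈ K_ε) ≥ 1 − ε. -/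

import Mathlib

open MeasureTheory
open scoped ENNReal

/-- The unit ball `F_BL(E)` of bounded Lipschitz functions:
`sup |f| + Lip(f) ≤ 1`. -/
def FBL (E : Type*) [PseudoMetricSpace E] : Set (E → ℝ) :=
  {f | ∃ a L : ℝ, 0 ≤ a ∧ 0 ≤ L ∧ a + L ≤ 1 ∧ (∀ x, |f x| ≤ a) ∧
    ∀ x y, |f x - f y| ≤ L * dist x y}

/-- If `X_n → X` weakly uniformly over `θ` (tested against `F_BL(ℝ^d)`) and the laws of `X`
are tight uniformly in `θ`, then the laws of `X_n` are eventually tight uniformly in `θ`: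
for every `ε > 0` there are a compact `K_ε` and `n₀` with
`inf_θ P_θ(X_n ∈ K_ε) ≥ 1 - ε` for all `n ≥ n₀`. -/
theorem stmt15 {Ω Θ : Type*} [MeasurableSpace Ω] (d : ℕ) (hd : 1 ≤ d)
    (P : Θ → Measure Ω) (hP : ∀ θ, IsProbabilityMeasure (P θ))
    (X : ℕ → Ω → EuclideanSpace ℝ (Fin d)) (X₀ : Ω → EuclideanSpace ℝ (Fin d))
    (hX : ∀ n, Measurable (X n)) (hX₀ : Measurable X₀)
    (ha : ∀ ε : ℝ, 0 < ε → ∃ N, ∀ n ≥ N, ∀ θ, ∀ f ∈ FBL (EuclideanSpace ℝ (Fin d)),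
      (∫ ω, |f (X n ω) - f (X₀ ω)| ∂(P θ)) ≤ ε)
    (hb : ∀ ε : ℝ≥0∞, 0 < ε → ∃ K : Set (EuclideanSpace ℝ (Fin d)), IsCompact K ∧
      ∀ θ, 1 - ε ≤ P θ (X₀ ⁻¹' K)) :
    ∀ ε : ℝ≥0∞, 0 < ε → ∃ K : Set (EuclideanSpace ℝ (Fin d)), IsCompact K ∧
      ∃ n₀ : ℕ, ∀ n ≥ n₀, ∀ θ, 1 - ε ≤ P θ (X n ⁻¹' K) := by
  intro ε hε
  by_cases hε1 : 1 ≤ ε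
  · exact ⟨∅, isCompact_empty, 0, fun n _ θ => by
      simp [tsub_eq_zero_of_le hε1]⟩
  push_neg at hε1
  have hεtop : ε ≠ ∞ := (hε1.trans (by norm_num)).ne
  set e : ℝ := ε.toReal with he
  have he0 : 0 < e := ENNReal.toReal_pos hε.ne' hεtop
  have he1 : e ≤ 1 := by
    rw [he, ← ENNReal.toReal_one]
    exact ENNReal.toReal_mono (by norm_num) hε1.le
  -- tightness of X₀ at level ε/2
  obtain ⟨K, hKc, hK⟩ := hb (ε / 2) (ENNReal.div_pos hε.ne' (by norm_num))
  -- K inside a ball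
  obtain ⟨R, hR⟩ := hKc.isBounded.subset_closedBall 0
  set K' : Set (EuclideanSpace ℝ (Fin d)) := Metric.closedBall 0 (R + 1) with hK'
  have hK'c : IsCompact K' := isCompact_closedBall 0 (R + 1)
  -- the bump function
  set g : EuclideanSpace ℝ (Fin d) → ℝ :=
    fun x => max (min ((R + 1) - ‖x‖) 1) 0 with hg
  have hgLip : LipschitzWith 1 g := by
    have h1 : LipschitzWith 1 (fun x : EuclideanSpace ℝ (Fin d) => (R + 1) - ‖x‖) := by
      have := (LipschitzWith.const (R + 1) :
        LipschitzWith 0 (fun _ : EuclideanSpace ℝ (Fin d) => (R + 1))).sub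
        (lipschitzWith_one_norm (E := EuclideanSpace ℝ (Fin d)))
      simpa using this
    exact (h1.min_const 1).max_const 0
  have hg01 : ∀ x, 0 ≤ g x ∧ g x ≤ 1 := fun x =>
    ⟨le_max_right _ _, max_le (min_le_right _ _) zero_le_one⟩
  have hgK : ∀ x ∈ K, g x = 1 := by
    intro x hx
    have hx' : ‖x‖ ≤ R := by simpa using hR hx
    have : (1 : ℝ) ≤ (R + 1) - ‖x‖ := by linarith
    simp [hg, min_eq_right this, max_eq_left (zero_le_one)]
  have hgK' : ∀ x, 0 < g x → x ∈ K' := by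
    intro x hx
    by_contra h
    have : R + 1 < ‖x‖ := by simpa [hK', mem_closedBall_zero_iff, not_le] using h
    have : (R + 1) - ‖x‖ < 0 := by linarith
    have hmin : min ((R + 1) - ‖x‖) 1 ≤ 0 := le_trans (min_le_left _ _) this.le
    have : g x = 0 := max_eq_right hmin
    simp [this] at hx
  -- g ∘ (anything measurable) is integrable
  have hgcont : Continuous g := hgLip.continuous
  have hInt : ∀ (Y : Ω → EuclideanSpace ℝ (Fin d)), Measurable Y → ∀ θ,
      Integrable (fun ω => g (Y ω)) (P θ) := by
    intro Y hY θ
    have := hP θ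
    refine Integrable.mono' (integrable_const 1) ((hgcont.measurable.comp hY).aestronglyMeasurable) ?_
    filter_upwards with ω
    rw [Real.norm_eq_abs, abs_of_nonneg (hg01 _).1]
    exact (hg01 _).2
  -- f := g/2 is in FBL
  have hfFBL : (fun x => g x / 2) ∈ FBL (EuclideanSpace ℝ (Fin d)) := by
    refine ⟨1/2, 1/2, by norm_num, by norm_num, by norm_num, ?_, ?_⟩
    · intro x
      rw [abs_of_nonneg (by linarith [(hg01 x).1])]
      linarith [(hg01 x).2]
    · intro x y
      have := hgLip.dist_le_mul x y
      rw [Real.dist_eq] at this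
      rw [div_sub_div_same, abs_div]
      simp only [abs_two] at *
      rw [div_le_iff₀ (by norm_num)]
      calc |g x - g y| ≤ 1 * dist x y := by simpa using this
        _ = 1/2 * dist x y * 2 := by ring
  -- apply ha
  obtain ⟨N, hN⟩ := ha (e / 4) (by linarith)
  refine ⟨K', hK'c, N, fun n hn θ => ?_⟩
  have hprob := hP θ
  -- ∫ |g(Xn) - g(X₀)| ≤ e/2
  have hdiff : (∫ ω, |g (X n ω) - g (X₀ ω)| ∂(P θ)) ≤ e / 2 := by
    have h := hN n hn θ _ hfFBL
    have heq : ∀ ω, |g (X n ω) / 2 - g (X₀ ω) / 2| = |g (X n ω) - g (X₀ ω)| / 2 := by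
      intro ω
      rw [div_sub_div_same, abs_div, abs_two]
    simp_rw [heq] at h
    rw [integral_div] at h
    linarith
  -- ∫ g(X₀) ≥ 1 - e/2
  have hX₀int : (1 : ℝ) - e / 2 ≤ ∫ ω, g (X₀ ω) ∂(P θ) := by
    have hKmeas : MeasurableSet K := hKc.isClosed.measurableSet
    have hind : (∫ ω, (K.indicator (fun _ => (1:ℝ))) (X₀ ω) ∂(P θ))
        = ((P θ) (X₀ ⁻¹' K)).toReal := by
      have : (fun ω => (K.indicator (fun _ => (1:ℝ))) (X₀ ω))
          = (X₀ ⁻¹' K).indicator (fun _ => (1:ℝ)) := by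
        ext ω
        by_cases h : X₀ ω ∈ K
        · rw [Set.indicator_of_mem h, Set.indicator_of_mem (by exact h)]
        · rw [Set.indicator_of_notMem h, Set.indicator_of_notMem (by exact h)]
      rw [this]
      simp [integral_indicator_const, hX₀ hKmeas, Measure.real]
    have hmono : (∫ ω, (K.indicator (fun _ => (1:ℝ))) (X₀ ω) ∂(P θ))
        ≤ ∫ ω, g (X₀ ω) ∂(P θ) := by
      refine integral_mono ?_ (hInt X₀ hX₀ θ) ?_
      · refine Integrable.mono' (integrable_const 1)
          ((measurable_const.indicator hKmeas).comp hX₀).aestronglyMeasurable ?_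
        filter_upwards with ω
        rw [Real.norm_eq_abs]
        by_cases h : X₀ ω ∈ K <;> simp [Set.indicator_apply, h]
      · intro ω
        show K.indicator (fun _ => (1:ℝ)) (X₀ ω) ≤ g (X₀ ω)
        by_cases h : X₀ ω ∈ K
        · rw [Set.indicator_of_mem h]; exact (hgK _ h).ge
        · rw [Set.indicator_of_notMem h]; exact (hg01 _).1
    have hmeasle : (1 : ℝ) - e / 2 ≤ ((P θ) (X₀ ⁻¹' K)).toReal := by
      have h1 : ((1 : ℝ≥0∞) - ε / 2).toReal = 1 - e / 2 := by
        rw [ENNReal.toReal_sub_of_le (by exact le_trans (ENNReal.half_le_self) hε1.le) (by norm_num)]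
        simp [ENNReal.toReal_div, he]
      rw [← h1]
      exact ENNReal.toReal_mono (measure_ne_top _ _) (hK θ)
    linarith [hind ▸ hmono]
  -- ∫ g(Xn) ≤ P(Xn ∈ K')
  have hXnint : (∫ ω, g (X n ω) ∂(P θ)) ≤ ((P θ) (X n ⁻¹' K')).toReal := by
    have hK'meas : MeasurableSet K' := hK'c.isClosed.measurableSet
    have hind : (∫ ω, (K'.indicator (fun _ => (1:ℝ))) (X n ω) ∂(P θ))
        = ((P θ) (X n ⁻¹' K')).toReal := by
      have : (fun ω => (K'.indicator (fun _ => (1:ℝ))) (X n ω))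
          = (X n ⁻¹' K').indicator (fun _ => (1:ℝ)) := by
        ext ω
        by_cases h : X n ω ∈ K'
        · rw [Set.indicator_of_mem h, Set.indicator_of_mem (by exact h)]
        · rw [Set.indicator_of_notMem h, Set.indicator_of_notMem (by exact h)]
      rw [this]
      simp [integral_indicator_const, hX n hK'meas, Measure.real]
    rw [← hind]
    refine integral_mono (hInt (X n) (hX n) θ) ?_ ?_
    · refine Integrable.mono' (integrable_const 1)
        ((measurable_const.indicator hK'meas).comp (hX n)).aestronglyMeasurable ?_
      filter_upwards with ω
      rw [Real.norm_eq_abs]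
      by_cases h : X n ω ∈ K' <;> simp [Set.indicator_apply, h]
    · intro ω
      show g (X n ω) ≤ K'.indicator (fun _ => (1:ℝ)) (X n ω)
      by_cases h : X n ω ∈ K'
      · rw [Set.indicator_of_mem h]; exact (hg01 _).2
      · have hg0 : g (X n ω) = 0 := by
          by_contra h'
          exact h (hgK' _ (lt_of_le_of_ne (hg01 _).1 (Ne.symm h')))
        rw [Set.indicator_of_notMem h, hg0]
  -- ∫ g(X₀) - ∫ g(Xn) ≤ ∫ |g(Xn) - g(X₀)|
  have hclose : (∫ ω, g (X₀ ω) ∂(P θ)) - (∫ ω, g (X n ω) ∂(P θ))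
      ≤ ∫ ω, |g (X n ω) - g (X₀ ω)| ∂(P θ) := by
    rw [← integral_sub (hInt X₀ hX₀ θ) (hInt (X n) (hX n) θ)]
    refine integral_mono (Integrable.sub (hInt X₀ hX₀ θ) (hInt (X n) (hX n) θ)) ?_ ?_
    · exact (Integrable.sub (hInt (X n) (hX n) θ) (hInt X₀ hX₀ θ)).abs
    · intro ω
      show g (X₀ ω) - g (X n ω) ≤ |g (X n ω) - g (X₀ ω)|
      rw [abs_sub_comm]
      exact le_abs_self _
  -- conclude
  have hfinal : (1 : ℝ) - e ≤ ((P θ) (X n ⁻¹' K')).toReal := by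
    linarith
  have h1 : ((1 : ℝ≥0∞) - ε).toReal = 1 - e := by
    rw [ENNReal.toReal_sub_of_le hε1.le (by norm_num)]
    simp [he]
  rw [← ENNReal.toReal_le_toReal (by simp [hεtop]) (measure_ne_top _ _)] at *
  rw [h1]
  exact hfinal
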